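/- Let p, q ∈ (1,∞) and x ∈ [0,1]. Then cos_{p,q}(π_{p,q}·x/2) = sin_{q*,p*}^{p*−1}(π_{q*,p*}·(1−x)/2) and sin_{p,q}(π_{p,q}·x/2) = cos_{q*,p*}^{q*−1}(π_{q*,p*}·(1−x)/2), where p* = p/(p−1) and q* = q/(q−1). -/

import Mathlib

open Set MeasureTheory Filter
open Topology

/-- Generalized arcsine: `arcsin_{p,q}(x) = ∫₀ˣ (1 - tᵠ)^(-1/p) dt`. -/
noncomputable def gArcsin (p q x : ℝ) : ℝ := ∫ t in (0:ℝ)..x, (1 - t ^ q) ^ (-(1 / p))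

/-- Generalized pi: `π_{p,q} = 2 ∫₀¹ (1 - tᵠ)^(-1/p) dt`. -/
noncomputable def gPi (p q : ℝ) : ℝ := 2 * gArcsin p q 1

/-- `S` is the generalized sine `sin_{p,q}` (the inverse of `gArcsin p q` on `[0,1]`). -/
def IsGSin (p q : ℝ) (S : ℝ → ℝ) : Prop :=
  ∀ y ∈ Icc (0:ℝ) 1, S (gArcsin p q y) = y

/-- `C` is the generalized cosine `cos_{p,q}`, the derivative of `S = sin_{p,q}`
on `[0, π_{p,q}/2]`. -/
def IsGCos (p q : ℝ) (S C : ℝ → ℝ) : Prop :=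
  ∀ x ∈ Icc (0:ℝ) (gPi p q / 2), HasDerivWithinAt S (C x) (Icc (0:ℝ) (gPi p q / 2)) x

lemma fmeas (p q : ℝ) : Measurable (fun t : ℝ => (1 - t ^ q) ^ (-(1/p))) := by
  fun_prop

lemma base_nonneg {q : ℝ} (hq : 0 < q) {t : ℝ} (h0 : 0 ≤ t) (h1 : t ≤ 1) :
    0 ≤ 1 - t ^ q := by
  have : t ^ q ≤ 1 := Real.rpow_le_one h0 h1 hq.le
  linarith

lemma fint (p q : ℝ) (hp : 1 < p) (hq : 1 < q) :
    IntervalIntegrable (fun t : ℝ => (1 - t ^ q) ^ (-(1/p))) volume 0 1 := by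
  have h1 : IntervalIntegrable (fun t : ℝ => (1 - t) ^ (-(1/p))) volume 0 1 := by
    have := ((intervalIntegral.intervalIntegrable_rpow' (a := 0) (b := 1)
      (r := -(1/p)) (by rw [neg_lt_neg_iff, div_lt_iff₀ (by linarith)]; linarith)).comp_sub_left
      1).symm
    simpa using this
  refine h1.mono_fun ((fmeas p q).aestronglyMeasurable) ?_
  filter_upwards [MeasureTheory.ae_restrict_mem measurableSet_Ioc] with t ht
  rw [Set.uIoc_of_le (by norm_num : (0:ℝ) ≤ 1)] at ht
  have hb := base_nonneg (by linarith : (0:ℝ) < q) ht.1.le ht.2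
  have hb2 : (1:ℝ) - t ≤ 1 - t ^ q := by
    have : t ^ q ≤ t := by
      calc t ^ q ≤ t ^ (1:ℝ) := Real.rpow_le_rpow_of_exponent_ge ht.1 ht.2 hq.le
      _ = t := Real.rpow_one t
    linarith
  have ht1 : (0:ℝ) ≤ 1 - t := by linarith [ht.2]
  rw [Real.norm_eq_abs, Real.norm_eq_abs, abs_of_nonneg (Real.rpow_nonneg hb _),
    abs_of_nonneg (Real.rpow_nonneg ht1 _)]
  rcases eq_or_lt_of_le ht1 with h | h
  · have : t = 1 := by linarith
    subst this
    simp [Real.one_rpow, Real.zero_rpow (neg_ne_zero.mpr (by positivity : (1:ℝ)/p ≠ 0))]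
  · exact Real.rpow_le_rpow_of_nonpos h hb2 (by rw [neg_nonpos]; positivity)

lemma fint' (p q : ℝ) (hp : 1 < p) (hq : 1 < q) {a b : ℝ}
    (ha : a ∈ Icc (0:ℝ) 1) (hb : b ∈ Icc (0:ℝ) 1) :
    IntervalIntegrable (fun t : ℝ => (1 - t ^ q) ^ (-(1/p))) volume a b :=
  (fint p q hp hq).mono_set (by
    rw [Set.uIcc_of_le (by norm_num : (0:ℝ) ≤ 1)]
    exact Set.uIcc_subset_Icc ha hb)

lemma fpos (p q : ℝ) (hq : 0 < q) {t : ℝ} (h0 : 0 ≤ t) (h1 : t < 1) :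
    0 < (1 - t ^ q) ^ (-(1/p)) := by
  apply Real.rpow_pos_of_pos
  have : t ^ q < 1 := by
    rcases eq_or_lt_of_le h0 with h | h
    · rw [← h, Real.zero_rpow hq.ne']; norm_num
    · exact Real.rpow_lt_one h0 h1 hq
  linarith

lemma fcont (p q : ℝ) (hq : 1 < q) {t : ℝ} (h0 : 0 ≤ t) (h1 : t < 1) :
    ContinuousAt (fun t : ℝ => (1 - t ^ q) ^ (-(1/p))) t := by
  have hbase : ContinuousAt (fun t : ℝ => 1 - t ^ q) t :=
    continuousAt_const.sub (Real.continuousAt_rpow_const t q (Or.inr (by linarith)))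
  have hpos : (0:ℝ) < 1 - t ^ q := by
    have : t ^ q < 1 := by
      rcases eq_or_lt_of_le h0 with h | h
      · rw [← h, Real.zero_rpow (by linarith)]; norm_num
      · exact Real.rpow_lt_one h0 h1 (by linarith)
    linarith
  exact hbase.rpow_const (Or.inl hpos.ne')

/-- FTC: derivative of gArcsin. -/
lemma gArcsin_hasDerivAt (p q : ℝ) (hp : 1 < p) (hq : 1 < q) {y : ℝ}
    (h0 : 0 ≤ y) (h1 : y < 1) :
    HasDerivAt (gArcsin p q) ((1 - y ^ q) ^ (-(1/p))) y := by
  apply intervalIntegral.integral_hasDerivAt_right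
    (fint' p q hp hq (Set.left_mem_Icc.mpr zero_le_one) (by constructor <;> linarith))
    ((fmeas p q).aestronglyMeasurable.stronglyMeasurableAtFilter)
    (fcont p q hq h0 h1)

lemma gArcsin_continuousOn (p q : ℝ) (hp : 1 < p) (hq : 1 < q) :
    ContinuousOn (gArcsin p q) (Icc 0 1) := by
  have := intervalIntegral.continuousOn_primitive_interval'
    (μ := volume) (fint p q hp hq) Set.left_mem_uIcc
  rwa [Set.uIcc_of_le (by norm_num : (0:ℝ) ≤ 1)] at this

lemma gArcsin_strictMonoOn (p q : ℝ) (hp : 1 < p) (hq : 1 < q) :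
    StrictMonoOn (gArcsin p q) (Icc 0 1) := by
  intro a ha b hb hab
  have h0 : (0:ℝ) ∈ Icc (0:ℝ) 1 := Set.left_mem_Icc.mpr zero_le_one
  have : 0 < gArcsin p q b - gArcsin p q a := by
    rw [show gArcsin p q b - gArcsin p q a
        = ∫ t in a..b, (1 - t ^ q) ^ (-(1/p)) from
      intervalIntegral.integral_interval_sub_left
        (fint' p q hp hq h0 hb) (fint' p q hp hq h0 ha)]
    apply intervalIntegral.intervalIntegral_pos_of_pos_on
      (fint' p q hp hq ha hb)
      (fun x hx => fpos p q (by linarith) (le_of_lt (lt_of_le_of_lt ha.1 hx.1))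
        (lt_of_lt_of_le hx.2 hb.2)) hab
  linarith

lemma conj_gt_one {p : ℝ} (hp : 1 < p) : 1 < p / (p - 1) :=
  (one_lt_div (by linarith)).mpr (by linarith)

lemma sigma_mem (p q : ℝ) (hp : 1 < p) (hq : 1 < q) {y : ℝ} (h0 : 0 ≤ y) (h1 : y ≤ 1) :
    (1 - y ^ q) ^ ((p-1)/p) ∈ Icc (0:ℝ) 1 := by
  have hb := base_nonneg (by linarith : (0:ℝ) < q) h0 h1
  constructor
  · exact Real.rpow_nonneg hb _
  · apply Real.rpow_le_one hb _ (div_nonneg (by linarith) (by linarith))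
    have : 0 ≤ y ^ q := Real.rpow_nonneg h0 q
    linarith

lemma gArcsin_zero (p q : ℝ) : gArcsin p q 0 = 0 := by simp [gArcsin]

lemma dual_identity (p q : ℝ) (hp : 1 < p) (hq : 1 < q) {y : ℝ} (h0 : 0 ≤ y) (h1 : y ≤ 1) :
    gArcsin (q/(q-1)) (p/(p-1)) ((1 - y ^ q) ^ ((p-1)/p))
      = gPi (q/(q-1)) (p/(p-1)) / 2 - (q*(p-1)/p) * gArcsin p q y := by
  set qs := q/(q-1) with hqs
  set ps := p/(p-1) with hps
  have hqs1 : 1 < qs := conj_gt_one hq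
  have hps1 : 1 < ps := conj_gt_one hp
  set σ : ℝ → ℝ := fun y => (1 - y ^ q) ^ ((p-1)/p) with hσ
  set H : ℝ → ℝ := fun y => gArcsin qs ps (σ y) + (q*(p-1)/p) * gArcsin p q y with hH
  have hσcont : Continuous σ := by
    rw [continuous_iff_continuousAt]
    intro t
    exact (continuousAt_const.sub
      (Real.continuousAt_rpow_const t q (Or.inr (by linarith)))).rpow_const
      (Or.inr (div_nonneg (by linarith) (by linarith)))
  have hHcont : ContinuousOn H (Icc 0 1) := by
    apply ContinuousOn.add
    · exact (gArcsin_continuousOn qs ps hqs1 hps1).comp hσcont.continuousOn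
        (fun y hy => sigma_mem p q hp hq hy.1 hy.2)
    · exact continuousOn_const.mul (gArcsin_continuousOn p q hp hq)
  have hHderiv : ∀ y ∈ Ioo (0:ℝ) 1, HasDerivAt H 0 y := by
    intro y hy
    obtain ⟨hy0, hy1⟩ := hy
    have hbase : 0 < 1 - y ^ q := by
      have : y ^ q < 1 := Real.rpow_lt_one hy0.le hy1 (by linarith)
      linarith
    have hyq : 0 < y ^ q := Real.rpow_pos_of_pos hy0 q
    have hσlt : σ y < 1 := by
      apply Real.rpow_lt_one hbase.le (by linarith) (div_pos (by linarith) (by linarith))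
    have hσ0 : 0 ≤ σ y := Real.rpow_nonneg hbase.le _
    have hinner : HasDerivAt (fun u : ℝ => 1 - u ^ q) (-(q * y ^ (q-1))) y :=
      (Real.hasDerivAt_rpow_const (Or.inl hy0.ne')).const_sub 1
    have houter : HasDerivAt (fun u : ℝ => u ^ ((p-1)/p))
        (((p-1)/p) * (1 - y ^ q) ^ ((p-1)/p - 1)) (1 - y ^ q) :=
      Real.hasDerivAt_rpow_const (Or.inl hbase.ne')
    have hσ' : HasDerivAt σ
        ((((p-1)/p) * (1 - y ^ q) ^ ((p-1)/p - 1)) * (-(q * y ^ (q-1)))) y :=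
      by have h := houter.comp y hinner; exact h
    have hG' : HasDerivAt (gArcsin qs ps) ((1 - (σ y) ^ ps) ^ (-(1/qs))) (σ y) :=
      gArcsin_hasDerivAt qs ps hqs1 hps1 hσ0 hσlt
    have hF' : HasDerivAt (gArcsin p q) ((1 - y ^ q) ^ (-(1/p))) y :=
      gArcsin_hasDerivAt p q hp hq hy0.le hy1
    have hcomp := (hG'.comp y hσ').add (hF'.const_mul (q*(p-1)/p))
    have hval : (1 - (σ y) ^ ps) ^ (-(1/qs))
        * ((((p-1)/p) * (1 - y ^ q) ^ ((p-1)/p - 1)) * (-(q * y ^ (q-1))))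
        + (q*(p-1)/p) * (1 - y ^ q) ^ (-(1/p)) = 0 := by
      have hp0 : p ≠ 0 := by linarith
      have hp1 : p - 1 ≠ 0 := by linarith
      have hq0 : q ≠ 0 := by linarith
      have hq1 : q - 1 ≠ 0 := by linarith
      have e1 : (σ y) ^ ps = 1 - y ^ q := by
        show ((1 - y ^ q) ^ ((p-1)/p)) ^ ps = 1 - y ^ q
        rw [← Real.rpow_mul hbase.le, show (p-1)/p * ps = 1 by rw [hps]; field_simp,
          Real.rpow_one]
      rw [e1, show (1:ℝ) - (1 - y ^ q) = y ^ q by ring]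
      have e2 : (y ^ q) ^ (-(1/qs)) = (y ^ (q-1))⁻¹ := by
        rw [← Real.rpow_mul hy0.le, show q * -(1/qs) = -(q-1) by rw [hqs]; field_simp,
          Real.rpow_neg hy0.le]
      have e3 : (1 - y ^ q) ^ ((p-1)/p - 1) = (1 - y ^ q) ^ (-(1/p)) := by
        rw [show (p-1)/p - 1 = -(1/p) by field_simp; ring]
      rw [e2, e3]
      have hB : (0:ℝ) < y ^ (q-1) := Real.rpow_pos_of_pos hy0 _
      field_simp
      ring
    rw [hval] at hcomp
    exact hcomp
  -- constancy
  have key : ∀ z ∈ Ioc (0:ℝ) 1, H z = H 1 := by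
    intro z hz
    have := constant_of_has_deriv_right_zero (f := H) (a := z) (b := 1)
      (hHcont.mono (Icc_subset_Icc hz.1.le le_rfl))
      (fun u hu => ((hHderiv u ⟨lt_of_lt_of_le hz.1 hu.1, hu.2⟩).hasDerivWithinAt))
    exact (this 1 (right_mem_Icc.mpr hz.2)).symm
  have h01 : H 0 = H 1 := by
    have hneB : (𝓝[Ioc (0:ℝ) 1] 0).NeBot := by
      rw [nhdsWithin_Ioc_eq_nhdsGT zero_lt_one]
      infer_instance
    have t1 : Tendsto H (𝓝[Ioc (0:ℝ) 1] 0) (𝓝 (H 0)) :=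
      ((hHcont 0 (left_mem_Icc.mpr zero_le_one)).mono Ioc_subset_Icc_self).tendsto
    have t2 : Tendsto H (𝓝[Ioc (0:ℝ) 1] 0) (𝓝 (H 1)) := by
      refine Tendsto.congr' ?_ tendsto_const_nhds
      filter_upwards [eventually_mem_nhdsWithin] with z hz
      exact (key z hz).symm
    exact tendsto_nhds_unique t1 t2
  have hH0 : H 0 = gPi qs ps / 2 := by
    have : σ 0 = 1 := by
      show (1 - (0:ℝ) ^ q) ^ ((p-1)/p) = 1
      rw [Real.zero_rpow (by linarith), sub_zero, Real.one_rpow]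
    rw [hH]
    simp only [this, gArcsin_zero, mul_zero, add_zero, gPi]
    ring
  have hfin : H y = gPi qs ps / 2 := by
    rcases eq_or_lt_of_le h0 with h | h
    · rw [← h]
      exact hH0
    · rw [key y ⟨h, h1⟩, ← h01, hH0]
  have : gArcsin qs ps (σ y) = gPi qs ps / 2 - (q*(p-1)/p) * gArcsin p q y := by
    have := hfin
    rw [hH] at this
    simp only at this
    linarith
  exact this

lemma gPi_div_two (p q : ℝ) : gPi p q / 2 = gArcsin p q 1 := by rw [gPi]; ring

lemma gArcsin_surj (p q : ℝ) (hp : 1 < p) (hq : 1 < q) {t : ℝ}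
    (ht : t ∈ Icc (0:ℝ) (gPi p q / 2)) : ∃ y ∈ Icc (0:ℝ) 1, gArcsin p q y = t := by
  have := intermediate_value_Icc (zero_le_one) (gArcsin_continuousOn p q hp hq)
  rw [gArcsin_zero] at this
  rw [gPi_div_two] at ht
  obtain ⟨y, hy, hyt⟩ := this ht
  exact ⟨y, hy, hyt⟩

lemma gPi_pos (p q : ℝ) (hp : 1 < p) (hq : 1 < q) : 0 < gPi p q / 2 := by
  rw [gPi_div_two]
  have := gArcsin_strictMonoOn p q hp hq (left_mem_Icc.mpr zero_le_one)
    (right_mem_Icc.mpr zero_le_one) zero_lt_one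
  rwa [gArcsin_zero] at this

/-- value of the cosine at interior points -/
lemma cos_val (p q : ℝ) (hp : 1 < p) (hq : 1 < q) (S C : ℝ → ℝ)
    (hS : IsGSin p q S) (hC : IsGCos p q S C) {y : ℝ} (h0 : 0 ≤ y) (h1 : y < 1) :
    C (gArcsin p q y) = (1 - y ^ q) ^ (1/p) := by
  set b := gPi p q / 2 with hb
  have hb0 : 0 < b := gPi_pos p q hp hq
  set t := gArcsin p q y with htdef
  have hmono := gArcsin_strictMonoOn p q hp hq
  have ht : t ∈ Icc (0:ℝ) b := by
    constructor
    · rw [htdef, ← gArcsin_zero p q]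
      exact hmono.monotoneOn (left_mem_Icc.mpr zero_le_one) ⟨h0, h1.le⟩ h0
    · rw [htdef, hb, gPi_div_two]
      exact hmono.monotoneOn ⟨h0, h1.le⟩ (right_mem_Icc.mpr zero_le_one) h1.le
  have hSt : S t = y := hS y ⟨h0, h1.le⟩
  have hSd : HasDerivWithinAt S (C t) (Icc 0 b) t := hC t ht
  have hFd : HasDerivAt (gArcsin p q) ((1 - y ^ q) ^ (-(1/p))) (S t) := by
    rw [hSt]; exact gArcsin_hasDerivAt p q hp hq h0 h1
  have hchain := hFd.comp_hasDerivWithinAt t hSd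
  have hid : ∀ u ∈ Icc (0:ℝ) b, u = (gArcsin p q ∘ S) u := by
    intro u hu
    obtain ⟨z, hz, hzu⟩ := gArcsin_surj p q hp hq hu
    simp only [Function.comp]
    rw [← hzu, hS z hz]
  have hchain' : HasDerivWithinAt (fun u => u)
      ((1 - y ^ q) ^ (-(1/p)) * C t) (Icc 0 b) t :=
    hchain.congr hid (hid t ht)
  have hu : UniqueDiffWithinAt ℝ (Icc (0:ℝ) b) t := uniqueDiffOn_Icc hb0 t ht
  have h1' : (1 - y ^ q) ^ (-(1/p)) * C t = 1 := by
    rw [← hchain'.derivWithin hu, ← (hasDerivWithinAt_id t (Icc (0:ℝ) b)).derivWithin hu]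
    rfl
  have hfpos := fpos p q (by linarith) h0 h1
  have hbnn := base_nonneg (by linarith : (0:ℝ) < q) h0 h1.le
  rw [Real.rpow_neg hbnn] at h1' hfpos
  have hA := inv_pos.mp hfpos
  rw [inv_mul_eq_one₀ hA.ne'] at h1'
  exact h1'.symm

lemma cos_endpoint (p q : ℝ) (hp : 1 < p) (hq : 1 < q) (S C : ℝ → ℝ)
    (hS : IsGSin p q S) (hC : IsGCos p q S C) : C (gPi p q / 2) = 0 := by
  set b := gPi p q / 2 with hb
  have hb0 : 0 < b := gPi_pos p q hp hq
  have hb1 : b = gArcsin p q 1 := gPi_div_two p q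
  have hSb : S b = 1 := by rw [hb1]; exact hS 1 (right_mem_Icc.mpr zero_le_one)
  have hmono := gArcsin_strictMonoOn p q hp hq
  -- the inverse has derivative 0 at the right endpoint
  have hzero : HasDerivWithinAt S 0 (Icc 0 b) b := by
    rw [hasDerivWithinAt_iff_tendsto_slope]
    rw [NormedAddCommGroup.tendsto_nhds_zero]
    intro ε hε
    set M : ℝ := ε⁻¹ + 1 with hM
    have hM0 : 0 < M := by positivity
    -- the integrand blows up near 1
    have hinf : Tendsto (fun u : ℝ => (1 - u ^ q) ^ (-(1/p))) (𝓝[<] (1:ℝ)) atTop := by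
      have h1 : Tendsto (fun u : ℝ => 1 - u ^ q) (𝓝[<] (1:ℝ)) (𝓝[>] (0:ℝ)) := by
        rw [tendsto_nhdsWithin_iff]
        constructor
        · have : ContinuousAt (fun u : ℝ => 1 - u ^ q) 1 :=
            continuousAt_const.sub (Real.continuousAt_rpow_const 1 q (Or.inl one_ne_zero))
          have h := this.tendsto.mono_left (nhdsWithin_le_nhds : 𝓝[<] (1:ℝ) ≤ 𝓝 1)
          simpa [Real.one_rpow] using h
        · filter_upwards [Ioo_mem_nhdsLT_of_mem (by norm_num : (1:ℝ) ∈ Ioc 0 1)] with u hu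
          have : u ^ q < 1 := Real.rpow_lt_one hu.1.le hu.2 (by linarith)
          simpa using this
      have h2 : Tendsto (fun v : ℝ => v ^ (-(1/p))) (𝓝[>] (0:ℝ)) atTop := by
        have h3 : Tendsto (fun v : ℝ => v ^ (1/p)) (𝓝[>] (0:ℝ)) (𝓝[>] (0:ℝ)) := by
          rw [tendsto_nhdsWithin_iff]
          constructor
          · have : ContinuousAt (fun v : ℝ => v ^ (1/p)) 0 :=
              Real.continuousAt_rpow_const 0 (1/p) (Or.inr (by positivity))
            have h := this.tendsto.mono_left (nhdsWithin_le_nhds : 𝓝[>] (0:ℝ) ≤ 𝓝 0)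
            rwa [show (0:ℝ) ^ ((1:ℝ)/p) = 0 from Real.zero_rpow (by positivity)] at h
          · filter_upwards [self_mem_nhdsWithin] with v hv
            exact Real.rpow_pos_of_pos hv _
        have h4 := tendsto_inv_nhdsGT_zero.comp h3
        refine h4.congr' ?_
        filter_upwards [self_mem_nhdsWithin] with v hv
        simp only [Function.comp]
        rw [← Real.rpow_neg (le_of_lt hv)]
      exact h2.comp h1
    -- pick a threshold
    have hev : ∀ᶠ u in 𝓝[<] (1:ℝ), M ≤ (1 - u ^ q) ^ (-(1/p)) := hinf.eventually_ge_atTop M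
    rw [eventually_nhdsWithin_iff] at hev
    obtain ⟨s, hs, hs1⟩ := eventually_nhds_iff.mp hev
    obtain ⟨δ, hδ0, hδ⟩ := Metric.isOpen_iff.mp hs1.1 1 hs1.2
    set y₀ : ℝ := max (1 - δ/2) 0 with hy₀
    have hy₀0 : 0 ≤ y₀ := le_max_right _ _
    have hy₀1 : y₀ < 1 := by
      rw [hy₀, max_lt_iff]
      constructor <;> [linarith; norm_num]
    have hbound : ∀ u, y₀ < u → u < 1 → M ≤ (1 - u ^ q) ^ (-(1/p)) := by
      intro u hu1 hu2
      apply hs u _ hu2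
      apply hδ
      rw [Metric.mem_ball, Real.dist_eq, abs_lt]
      have : 1 - δ/2 ≤ y₀ := le_max_left _ _
      constructor <;> linarith
    -- main estimate
    have hFy₀ : gArcsin p q y₀ < b := by
      rw [hb1]
      exact hmono ⟨hy₀0, hy₀1.le⟩ (right_mem_Icc.mpr zero_le_one) hy₀1
    filter_upwards [eventually_mem_nhdsWithin,
      eventually_nhdsWithin_of_eventually_nhds (eventually_gt_nhds hFy₀)] with t htmem hty₀
    obtain ⟨ht, htne⟩ := htmem
    have htb : t < b := lt_of_le_of_ne ht.2 htne
    obtain ⟨z, hz, hzt⟩ := gArcsin_surj p q hp hq ht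
    have hSt : S t = z := by rw [← hzt, hS z hz]
    have hz1 : z < 1 := by
      by_contra h
      have : z = 1 := le_antisymm hz.2 (not_lt.mp h)
      rw [this, ← hb1] at hzt
      exact htb.ne hzt.symm
    have hzy₀ : y₀ < z := by
      by_contra h
      have := hmono.monotoneOn hz ⟨hy₀0, hy₀1.le⟩ (not_lt.mp h)
      rw [hzt] at this
      exact absurd (lt_of_lt_of_le hty₀ this) (lt_irrefl _)
    -- integral lower bound : M * (1 - z) ≤ b - t
    have hint : M * (1 - z) ≤ b - t := by
      have e1 : b - t = ∫ u in z..1, (1 - u ^ q) ^ (-(1/p)) := by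
        rw [hb1, ← hzt, gArcsin, gArcsin]
        exact intervalIntegral.integral_interval_sub_left
          (fint p q hp hq) (fint' p q hp hq (left_mem_Icc.mpr zero_le_one) hz)
      have e2 : (∫ _ in z..(1:ℝ), M) ≤ ∫ u in z..1, (1 - u ^ q) ^ (-(1/p)) := by
        apply intervalIntegral.integral_mono_ae_restrict hz1.le
          intervalIntegrable_const (fint' p q hp hq hz (right_mem_Icc.mpr zero_le_one))
        have hne : ∀ᵐ u ∂(volume.restrict (Icc z 1)), u ≠ 1 := by
          apply ae_restrict_of_ae
          rw [ae_iff]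
          convert Real.volume_singleton (a := 1) using 2
          ext u; simp
        filter_upwards [hne, ae_restrict_mem measurableSet_Icc] with u hu1 hu2
        exact hbound u (lt_of_lt_of_le hzy₀ hu2.1) (lt_of_le_of_ne hu2.2 hu1)
      rw [intervalIntegral.integral_const, smul_eq_mul] at e2
      rw [e1]
      calc M * (1 - z) = (1 - z) * M := by ring
      _ ≤ _ := e2
    -- conclude
    have hslope : slope S b t = (1 - z) / (b - t) := by
      rw [slope_def_field, hSt, hSb]
      rw [div_eq_div_iff (by linarith) (by linarith)]
      ring
    rw [hslope, Real.norm_eq_abs, abs_of_nonneg (div_nonneg (by linarith [hz1.le]) (by linarith))]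
    have hbt : 0 < b - t := by linarith
    have : (1 - z) / (b - t) ≤ 1 / M := by
      rw [div_le_div_iff₀ hbt hM0]
      linarith
    have hlast : 1 / M < ε := by
      rw [div_lt_iff₀ hM0, hM]
      have : 0 < ε * ε⁻¹ := by
        rw [mul_inv_cancel₀ hε.ne']; norm_num
      nlinarith [mul_inv_cancel₀ hε.ne']
    linarith
  -- uniqueness of the derivative
  have h1 : HasDerivWithinAt S (C b) (Icc 0 b) b := hC b (right_mem_Icc.mpr hb0.le)
  have hu : UniqueDiffWithinAt ℝ (Icc (0:ℝ) b) b := uniqueDiffOn_Icc hb0 b (right_mem_Icc.mpr hb0.le)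
  exact ((h1.derivWithin hu).symm.trans (hzero.derivWithin hu))


/-- Appendix formulas (Proposition 3.2 of [EGL2012]): for `x ∈ [0,1]`,
`cos_{p,q}(π_{p,q} x/2) = sin_{q*,p*}^{p*-1}(π_{q*,p*}(1-x)/2)` and
`sin_{p,q}(π_{p,q} x/2) = cos_{q*,p*}^{q*-1}(π_{q*,p*}(1-x)/2)`. -/
theorem stmt_18 (p q : ℝ) (hp : 1 < p) (hq : 1 < q)
    (S C : ℝ → ℝ) (hS : IsGSin p q S) (hC : IsGCos p q S C)
    (S' C' : ℝ → ℝ)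
    (hS' : IsGSin (q / (q - 1)) (p / (p - 1)) S')
    (hC' : IsGCos (q / (q - 1)) (p / (p - 1)) S' C')
    (x : ℝ) (hx : x ∈ Icc (0:ℝ) 1) :
    C (gPi p q * x / 2) =
      S' (gPi (q / (q - 1)) (p / (p - 1)) * (1 - x) / 2) ^ (p / (p - 1) - 1) ∧
    S (gPi p q * x / 2) =
      C' (gPi (q / (q - 1)) (p / (p - 1)) * (1 - x) / 2) ^ (q / (q - 1) - 1) := by
  have hp1 : p - 1 ≠ 0 := by linarith
  have hq1 : q - 1 ≠ 0 := by linarith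
  have hp0 : p ≠ 0 := by linarith
  have hq0 : q ≠ 0 := by linarith
  set qs := q/(q-1) with hqs
  set ps := p/(p-1) with hps
  have hqs1 : 1 < qs := conj_gt_one hq
  have hps1 : 1 < ps := conj_gt_one hp
  set b := gPi p q / 2 with hb
  set b' := gPi qs ps / 2 with hb'
  have hb0 : 0 < b := gPi_pos p q hp hq
  set c : ℝ := q*(p-1)/p with hc
  have hc0 : 0 < c := by rw [hc]; apply div_pos (by nlinarith) (by linarith)
  -- t and surjectivity
  have ht : gPi p q * x / 2 ∈ Icc (0:ℝ) b := by
    constructor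
    · have := hx.1; nlinarith
    · have := hx.2; nlinarith
  set t := gPi p q * x / 2 with htdef
  obtain ⟨y, hy, hyt⟩ := gArcsin_surj p q hp hq ht
  set s : ℝ := (1 - y ^ q) ^ ((p-1)/p) with hs
  have hsmem : s ∈ Icc (0:ℝ) 1 := sigma_mem p q hp hq hy.1 hy.2
  have dual := dual_identity p q hp hq hy.1 hy.2
  have dual1 := dual_identity p q hp hq (zero_le_one) (le_refl (1:ℝ))
  rw [Real.one_rpow, sub_self, Real.zero_rpow (div_ne_zero hp1 hp0), gArcsin_zero,
    ← gPi_div_two] at dual1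
  -- b' = c * b
  have hbb : b' = c * b := by
    have : (0:ℝ) = b' - c * b := by rw [hb', hc, hb]; linarith [dual1]
    linarith
  -- the primed argument
  have harg : gArcsin qs ps s = gPi qs ps * (1-x) / 2 := by
    rw [← hs] at dual
    have h2 : gArcsin p q y = b * x := by rw [hyt, htdef, hb]; ring
    have h4 : gPi qs ps = 2 * b' := by rw [hb']; ring
    rw [dual, h2, ← hc, h4, hbb]
    ring
  have hS's : S' (gPi qs ps * (1-x) / 2) = s := by rw [← harg]; exact hS' s hsmem
  have hbase : 0 ≤ 1 - y ^ q := base_nonneg (by linarith) hy.1 hy.2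
  have e1 : s ^ ps = 1 - y ^ q := by
    rw [hs, ← Real.rpow_mul hbase, show (p-1)/p * ps = 1 by rw [hps]; field_simp,
      Real.rpow_one]
  constructor
  · -- first identity
    rw [hS's]
    rcases lt_or_eq_of_le hy.2 with h1 | h1
    · have := cos_val p q hp hq S C hS hC hy.1 h1
      rw [hyt] at this
      rw [this, hs, ← Real.rpow_mul hbase,
        show (p-1)/p * (ps - 1) = 1/p by rw [hps]; field_simp; ring]
    · -- y = 1 : endpoint
      have hs0 : s = 0 := by
        rw [hs, h1, Real.one_rpow, sub_self, Real.zero_rpow (div_ne_zero hp1 hp0)]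
      have htb : t = b := by rw [← hyt, h1, hb, gPi_div_two]
      rw [htb, hb, cos_endpoint p q hp hq S C hS hC, hs0,
        Real.zero_rpow (by linarith : ps - 1 ≠ 0)]
  · -- second identity
    have hSt : S t = y := by rw [← hyt]; exact hS y hy
    rw [hSt]
    rcases eq_or_lt_of_le hy.1 with h0 | h0
    · -- y = 0 : endpoint for the primed system
      have hs1 : s = 1 := by
        rw [hs, ← h0, Real.zero_rpow hq0, sub_zero, Real.one_rpow]
      have : gPi qs ps * (1-x) / 2 = gPi qs ps / 2 := by
        rw [← harg, hs1, ← gPi_div_two]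
      rw [this, cos_endpoint qs ps hqs1 hps1 S' C' hS' hC',
        Real.zero_rpow (by linarith : qs - 1 ≠ 0), h0]
    · -- y > 0
      have hslt : s < 1 := by
        rw [hs]
        apply Real.rpow_lt_one hbase _ (div_pos (by linarith) (by linarith))
        have : 0 < y ^ q := Real.rpow_pos_of_pos h0 q
        linarith
      have := cos_val qs ps hqs1 hps1 S' C' hS' hC' hsmem.1 hslt
      rw [harg] at this
      rw [this, e1, show (1:ℝ) - (1 - y ^ q) = y ^ q by ring,
        ← Real.rpow_mul h0.le, show q * (1/qs) = q - 1 by rw [hqs]; field_simp,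
        ← Real.rpow_mul h0.le, show (q-1) * (qs - 1) = 1 by rw [hqs]; field_simp; ring,
        Real.rpow_one]
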